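/- For every integer P ≥ 1, set L = 2^P, and let b be an integer with 1 ≤ b ≤ L. Let S_b = {i : 1 ≤ i ≤ b−1 and b ≤ i + 2^{ν₂(i)}}. Then the list obtained by concatenating, over i ∈ S_b taken in increasing order, the lists (i − 2^{ν₂(i)} + 1, i − 2^{ν₂(i)} + 2, …, i), is exactly the list (1, 2, …, b−1). Consequently, for any monoid M (not necessarily commutative) and any f : ℕ → M, the ordered product ∏_{a=1}^{b−1} f(a) equals the ordered product, over i ∈ S_b in increasing order, of the ordered products ∏_{a=i−2^{ν₂(i)}+1}^{i} f(a). -/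

import Mathlib

private lemma two_pow_dvd_iff_le_nu {n j : ℕ} (hn : n ≠ 0) :
    2 ^ j ∣ n ↔ j ≤ padicValNat 2 n := by
  haveI : Fact (Nat.Prime 2) := ⟨Nat.prime_two⟩
  exact padicValNat_dvd_iff_le hn

private lemma Tset_eq (n : ℕ) (hn : 1 ≤ n) :
    (Finset.Icc 1 n).filter (fun i => n + 1 ≤ i + 2 ^ padicValNat 2 i)
      = insert n ((Finset.Icc 1 (n - 2 ^ padicValNat 2 n)).filter
          (fun i => n - 2 ^ padicValNat 2 n + 1 ≤ i + 2 ^ padicValNat 2 i)) := by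
  haveI : Fact (Nat.Prime 2) := ⟨Nat.prime_two⟩
  set p := 2 ^ padicValNat 2 n with hp
  have hpdvd : p ∣ n := pow_padicValNat_dvd
  have hppos : 0 < p := Nat.pow_pos (by norm_num)
  have hple : p ≤ n := Nat.le_of_dvd (by omega) hpdvd
  have hn0 : n ≠ 0 := by omega
  have hodd : ¬ (2 * p ∣ n) := by
    have := pow_succ_padicValNat_not_dvd (p := 2) hn0
    rwa [pow_succ, mul_comm] at this
  ext i
  simp only [Finset.mem_filter, Finset.mem_Icc, Finset.mem_insert]
  set q := 2 ^ padicValNat 2 i with hq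
  constructor
  · rintro ⟨⟨h1, h2⟩, h3⟩
    by_cases hin : i = n
    · exact Or.inl hin
    right
    have hiltn : i < n := lt_of_le_of_ne h2 hin
    have hi0 : i ≠ 0 := by omega
    have hqdvd : q ∣ i := pow_padicValNat_dvd
    have hqpos : 0 < q := Nat.pow_pos (by norm_num)
    -- show ν n < ν i
    have hnu : padicValNat 2 n < padicValNat 2 i := by
      by_contra hc
      push_neg at hc
      have hqn : q ∣ n := dvd_trans (pow_dvd_pow 2 hc) hpdvd
      have : q ∣ n - i := Nat.dvd_sub hqn hqdvd
      have := Nat.le_of_dvd (by omega) this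
      omega
    have hpq : p ∣ q := pow_dvd_pow 2 (le_of_lt hnu)
    have hpi : p ∣ i := hpq.trans hqdvd
    have : p ∣ n - i := Nat.dvd_sub hpdvd hpi
    have := Nat.le_of_dvd (by omega) this
    refine ⟨⟨h1, by omega⟩, by omega⟩
  · rintro (rfl | ⟨⟨h1, h2⟩, h3⟩)
    · have hqpos : 0 < q := Nat.pow_pos (by norm_num)
      exact ⟨⟨by omega, le_refl _⟩, by omega⟩
    have hi0 : i ≠ 0 := by omega
    have hqdvd : q ∣ i := pow_padicValNat_dvd
    have hqpos : 0 < q := Nat.pow_pos (by norm_num)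
    have hnu : padicValNat 2 n < padicValNat 2 i := by
      by_contra hc
      push_neg at hc
      have hqp : q ∣ p := pow_dvd_pow 2 hc
      have hqn' : q ∣ n - p := Nat.dvd_sub (hqp.trans hpdvd) hqp
      have hd : q ∣ (n - p) - i := Nat.dvd_sub hqn' hqdvd
      have heq : i = n - p := by
        have := Nat.eq_zero_of_dvd_of_lt hd (by omega)
        omega
      -- then ν (n - p) ≥ ν n + 1, contradiction with ν i ≤ ν n
      have h2p : 2 * p ∣ n - p := by
        obtain ⟨m, hm⟩ := hpdvd
        have hmodd : ¬ (2 ∣ m) := by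
          rintro ⟨t, rfl⟩
          exact hodd ⟨t, by rw [hm]; ring⟩
        have hm1 : m ≠ 0 := by rintro rfl; omega
        obtain ⟨s, hs⟩ : 2 ∣ m - 1 := by omega
        have hm' : m = 2 * s + 1 := by omega
        refine ⟨s, ?_⟩
        have hns : p * (2 * s + 1) = 2 * p * s + p := by ring
        rw [hm, hm']
        omega
      have : padicValNat 2 n + 1 ≤ padicValNat 2 (n - p) := by
        rw [← two_pow_dvd_iff_le_nu (by omega), pow_succ, mul_comm]
        exact h2p
      rw [← heq] at this
      omega
    have hpq : p ∣ q := pow_dvd_pow 2 (le_of_lt hnu)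
    have hpi : p ∣ i := hpq.trans hqdvd
    have hd : p ∣ (n - p) - i := Nat.dvd_sub (Nat.dvd_sub hpdvd dvd_rfl) hpi
    -- n - p - i < q and divisible by p; p ∣ q; so n - p - i + p ≤ q
    have hlt : (n - p) - i < q := by omega
    have hle : (n - p) - i + p ≤ q := by
      have hd2 : p ∣ q - ((n - p) - i) := Nat.dvd_sub hpq hd
      have := Nat.le_of_dvd (by omega) hd2
      omega
    -- rule out n = i + q
    have hne : n ≠ i + q := by
      intro h
      have hqn : q ∣ n := by rw [h]; exact Nat.dvd_add hqdvd dvd_rfl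
      rw [two_pow_dvd_iff_le_nu hn0] at hqn
      omega
    refine ⟨⟨h1, by omega⟩, by omega⟩

private lemma tiles_main (n : ℕ) :
    (((Finset.Icc 1 n).filter (fun i => n + 1 ≤ i + 2 ^ padicValNat 2 i)).sort (· ≤ ·)).flatMap
        (fun i => List.range' (i - 2 ^ padicValNat 2 i + 1) (2 ^ padicValNat 2 i))
      = List.range' 1 n := by
  induction n using Nat.strong_induction_on with
  | _ n ih =>
    rcases Nat.eq_zero_or_pos n with rfl | hn
    · simp
    set p := 2 ^ padicValNat 2 n with hp
    have hpdvd : p ∣ n := pow_padicValNat_dvd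
    have hppos : 0 < p := Nat.pow_pos (by norm_num)
    have hple : p ≤ n := Nat.le_of_dvd (by omega) hpdvd
    set S' := (Finset.Icc 1 (n - p)).filter
        (fun i => n - p + 1 ≤ i + 2 ^ padicValNat 2 i) with hS'
    have hmem : ∀ x ∈ S', x ≤ n - p := by
      intro x hx
      simp only [hS', Finset.mem_filter, Finset.mem_Icc] at hx
      exact hx.1.2
    have hnotmem : n ∉ S' := fun h => by have := hmem n h; omega
    have hsort : ((Finset.Icc 1 n).filter
          (fun i => n + 1 ≤ i + 2 ^ padicValNat 2 i)).sort (· ≤ ·)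
        = S'.sort (· ≤ ·) ++ [n] := by
      rw [Tset_eq n hn]
      refine (fun hp hs => List.Perm.eq_of_pairwise' (Finset.pairwise_sort _ _) hs hp) ?_ ?_
      · exact (Finset.sort_perm_toList _ _).trans
          ((Finset.toList_insert hnotmem).trans
            ((List.Perm.cons n (Finset.sort_perm_toList _ _).symm).trans
              (List.perm_append_singleton _ _).symm))
      · rw [List.pairwise_append]
        refine ⟨Finset.pairwise_sort _ _, List.pairwise_singleton _ _, ?_⟩
        intro a ha b hb
        rw [List.mem_singleton] at hb
        subst hb
        have := hmem a ((Finset.mem_sort _).mp ha)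
        omega
    rw [hsort, List.flatMap_append, ih (n - p) (by omega)]
    simp only [List.flatMap_cons, List.flatMap_nil, List.append_nil, ← hp]
    have h1 : n - p + 1 = 1 + 1 * (n - p) := by omega
    rw [h1, List.range'_append]
    congr 1
    omega

/-- For an output column `b` with `1 ≤ b ≤ 2 ^ P`, concatenating — over the iterations
`i ∈ S_b = {i : 1 ≤ i ≤ b - 1, b ≤ i + 2 ^ ν₂ i}` in increasing order — the input
intervals `(i - 2 ^ ν₂ i + 1, …, i)` of the corresponding gray tiles yields exactly the
list `(1, 2, …, b - 1)`. Consequently, for any (not necessarily commutative) monoid `M`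
and any `f : ℕ → M`, the ordered product `∏_{a=1}^{b-1} f a` equals the ordered product
over `i ∈ S_b` (in increasing order) of the ordered products of `f` over the tile
intervals. -/
theorem tiles_aggregate_in_order (P : ℕ) (hP : 1 ≤ P) (b : ℕ) (hb1 : 1 ≤ b)
    (hb2 : b ≤ 2 ^ P) :
    (((Finset.Icc 1 (b - 1)).filter
          (fun i => b ≤ i + 2 ^ (padicValNat 2 i))).sort (· ≤ ·)).flatMap
        (fun i => List.range' (i - 2 ^ (padicValNat 2 i) + 1) (2 ^ (padicValNat 2 i)))
      = List.range' 1 (b - 1) ∧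
    ∀ (M : Type*) [Monoid M] (f : ℕ → M),
      ((List.range' 1 (b - 1)).map f).prod
        = ((((Finset.Icc 1 (b - 1)).filter
              (fun i => b ≤ i + 2 ^ (padicValNat 2 i))).sort (· ≤ ·)).map
            (fun i =>
              ((List.range' (i - 2 ^ (padicValNat 2 i) + 1)
                  (2 ^ (padicValNat 2 i))).map f).prod)).prod := by
  obtain ⟨n, rfl⟩ : ∃ n, b = n + 1 := ⟨b - 1, by omega⟩
  simp only [Nat.add_sub_cancel]
  have key := tiles_main n
  refine ⟨key, fun M _ f => ?_⟩
  rw [← key, List.map_flatMap]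
  induction ((Finset.Icc 1 n).filter
      (fun i => n + 1 ≤ i + 2 ^ (padicValNat 2 i))).sort (· ≤ ·) with
  | nil => simp
  | cons x xs ihx => simp [List.flatMap_cons, ihx]
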